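/- Let (B,⌊·,·⌋) be an SSD space, f ∈ PC(B), f ≥ q on B and P_q(f) ≠ ∅. Then P_q(f) is a q-positive subset of B, i.e. q(b − c) ≥ 0 for all b,c ∈ P_q(f). -/
import Mathlib


noncomputable section

variable {B : Type*} [AddCommGroup B] [Module ℝ B]

/-- The quadratic form `q(b) = ½⌊b,b⌋` associated with a bilinear form. -/
def qForm (br : B →ₗ[ℝ] B →ₗ[ℝ] ℝ) (b : B) : ℝ := (1 / 2) * br b b

/-- The intrinsic conjugate `f^@(c) = sup_{b} (⌊b,c⌋ - f(b))`. -/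
def intrinsicConj (br : B →ₗ[ℝ] B →ₗ[ℝ] ℝ) (f : B → EReal) (c : B) : EReal :=
  ⨆ b : B, ((br b c : ℝ) : EReal) - f b

/-- A proper function from `B` into `(-∞,∞]`: never `⊥` and somewhere finite. -/
def ProperFn (f : B → EReal) : Prop := (∀ b, f b ≠ ⊥) ∧ ∃ b, f b ≠ ⊤

/-- Convexity for `(-∞,∞]`-valued functions. -/
def ConvexFn (f : B → EReal) : Prop :=
  ∀ b c : B, ∀ t : ℝ, 0 ≤ t → t ≤ 1 →
    f (t • b + (1 - t) • c) ≤ (t : EReal) * f b + ((1 - t : ℝ) : EReal) * f c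

/-- `A` is q-positive: nonempty and `q(b - c) ≥ 0` for all `b, c ∈ A`. -/
def QPos (br : B →ₗ[ℝ] B →ₗ[ℝ] ℝ) (A : Set B) : Prop :=
  A.Nonempty ∧ ∀ b ∈ A, ∀ c ∈ A, 0 ≤ qForm br (b - c)

/-- `A` is maximally q-positive. -/
def MaxQPos (br : B →ₗ[ℝ] B →ₗ[ℝ] ℝ) (A : Set B) : Prop :=
  QPos br A ∧ ∀ C : Set B, QPos br C → A ⊆ C → C = A

/-- `Φ_A(b) = sup_{a ∈ A} (⌊a,b⌋ - q(a))`. -/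
def PhiA (br : B →ₗ[ℝ] B →ₗ[ℝ] ℝ) (A : Set B) (b : B) : EReal :=
  ⨆ a : A, ((br (a : B) b - qForm br (a : B) : ℝ) : EReal)

/-- `P_q(f) = {b : f(b) = q(b)}`. -/
def Pq (br : B →ₗ[ℝ] B →ₗ[ℝ] ℝ) (f : B → EReal) : Set B :=
  {b : B | f b = ((qForm br b : ℝ) : EReal)}

/-- `N_q(g) = {b : g(b) = -q(b)}`. -/
def Nq (br : B →ₗ[ℝ] B →ₗ[ℝ] ℝ) (f : B → EReal) : Set B :=
  {b : B | f b = ((-(qForm br b) : ℝ) : EReal)}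

/-- `f` is a BC-function: `f^@(b) ≥ f(b) ≥ q(b)` for all `b`. -/
def IsBC (br : B →ₗ[ℝ] B →ₗ[ℝ] ℝ) (f : B → EReal) : Prop :=
  ∀ b : B, ((qForm br b : ℝ) : EReal) ≤ f b ∧ f b ≤ intrinsicConj br f b

/-- `g` is a TBC-function: `g^@(-b) ≥ g(b) ≥ -q(b)` for all `b`. -/
def IsTBC (br : B →ₗ[ℝ] B →ₗ[ℝ] ℝ) (g : B → EReal) : Prop :=
  ∀ b : B, ((-(qForm br b) : ℝ) : EReal) ≤ g b ∧ g b ≤ intrinsicConj br g (-b)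

/-- The effective domain `dom f = {b : f(b) ∈ ℝ}`. -/
def domE (f : B → EReal) : Set B := {b : B | ∃ r : ℝ, f b = (r : EReal)}


/-- if `f ∈ PC(B)`, `f ≥ q` on `B` and `P_q(f) ≠ ∅`, then `P_q(f)` is a
q-positive subset of `B`. -/
theorem stmt7 [Nontrivial B] (br : B →ₗ[ℝ] B →ₗ[ℝ] ℝ)
    (hsymm : ∀ b c : B, br b c = br c b)
    (f : B → EReal) (hproper : ProperFn f) (hconv : ConvexFn f)
    (hfq : ∀ b : B, ((qForm br b : ℝ) : EReal) ≤ f b)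
    (hne : (Pq br f).Nonempty) :
    QPos br (Pq br f) := by
  refine ⟨hne, fun b hb c hc => ?_⟩
  have hb' : f b = ((qForm br b : ℝ) : EReal) := hb
  have hc' : f c = ((qForm br c : ℝ) : EReal) := hc
  have hmid := hconv b c (1/2) (by norm_num) (by norm_num)
  rw [hb', hc'] at hmid
  have hrhs : ((1/2 : ℝ) : EReal) * ((qForm br b : ℝ) : EReal)
      + ((1 - 1/2 : ℝ) : EReal) * ((qForm br c : ℝ) : EReal)
      = (((1/2) * qForm br b + (1/2) * qForm br c : ℝ) : EReal) := by
    norm_num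
  rw [hrhs] at hmid
  have hlow := hfq ((1/2 : ℝ) • b + (1 - 1/2 : ℝ) • c)
  have key : qForm br ((1/2 : ℝ) • b + (1 - 1/2 : ℝ) • c)
      ≤ (1/2) * qForm br b + (1/2) * qForm br c := by
    exact_mod_cast le_trans hlow hmid
  have hbc : br b c = br c b := hsymm b c
  simp only [qForm, map_add, map_smul, LinearMap.add_apply, LinearMap.smul_apply,
    smul_eq_mul, map_sub, LinearMap.sub_apply] at key ⊢
  nlinarith [key]
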